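/- With P irreducible and t_j, s_0 as above, there exists a constant C_4 such that |t_j − s_0| < C_4/j for all sufficiently large j. -/

import Mathlib

open Finset

/-- Product of transition weights along a word (list of letters). -/
def pword {N : ℕ} (P : Matrix (Fin N) (Fin N) ℝ) (l : List (Fin N)) : ℝ :=
  ((l.zip l.tail).map fun ab => P ab.1 ab.2).prod

/-- Admissible word: nonempty with positive transition weights. -/
def adm {N : ℕ} (P : Matrix (Fin N) (Fin N) ℝ) (l : List (Fin N)) : Prop :=
  l ≠ [] ∧ l.Chain' fun a b => 0 < P a b

/-- `m_σ = q_{σ_1} p_σ`. -/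
def mlist {N : ℕ} (q : Fin N → ℝ) (P : Matrix (Fin N) (Fin N) ℝ)
    (l : List (Fin N)) : ℝ :=
  (l.map q).headI * pword P l

/-- Product of the entries of `A` along a word of length `k+1`. -/
noncomputable def wprod {N k : ℕ} (A : Matrix (Fin N) (Fin N) ℝ)
    (σ : Fin (k + 1) → Fin N) : ℝ :=
  ∏ t : Fin k, A (σ t.castSucc) (σ t.succ)

/-- `u_k = ∑_{σ ∈ G_k} m_σ log m_σ` (convention `0 log 0 = 0`). -/
noncomputable def useq {N : ℕ} (q : Fin N → ℝ) (P : Matrix (Fin N) (Fin N) ℝ)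
    (k : ℕ) : ℝ :=
  ∑ σ : Fin (k - 1 + 1) → Fin N,
    (q (σ 0) * wprod P σ) * Real.log (q (σ 0) * wprod P σ)

/-- `l_k = ∑_{σ ∈ G_k} m_σ log c_σ`. -/
noncomputable def lseq {N : ℕ} (q : Fin N → ℝ) (P c : Matrix (Fin N) (Fin N) ℝ)
    (k : ℕ) : ℝ :=
  ∑ σ : Fin (k - 1 + 1) → Fin N,
    (q (σ 0) * wprod P σ) * Real.log (wprod c σ)

/-- edge-sum along a word -/
def esum {N : ℕ} (G : Fin N → Fin N → ℝ) (l : List (Fin N)) : ℝ :=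
  ((l.zip l.tail).map fun ab => G ab.1 ab.2).sum

section lists
variable {N : ℕ} (P : Matrix (Fin N) (Fin N) ℝ) (G : Fin N → Fin N → ℝ)

@[simp] lemma pword_nil : pword P ([] : List (Fin N)) = 1 := rfl
@[simp] lemma pword_singleton (a : Fin N) : pword P [a] = 1 := rfl
@[simp] lemma esum_nil : esum G ([] : List (Fin N)) = 0 := rfl
@[simp] lemma esum_singleton (a : Fin N) : esum G [a] = 0 := rfl

lemma pword_cons_cons (a b : Fin N) (l : List (Fin N)) :
    pword P (a :: b :: l) = P a b * pword P (b :: l) := by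
  simp [pword]

lemma esum_cons_cons (a b : Fin N) (l : List (Fin N)) :
    esum G (a :: b :: l) = G a b + esum G (b :: l) := by
  simp [esum]

lemma zipTail_append_singleton :
    ∀ (l : List (Fin N)) (h : l ≠ []) (b : Fin N),
    (l ++ [b]).zip (l ++ [b]).tail = l.zip l.tail ++ [(l.getLast h, b)]
  | [], h, b => absurd rfl h
  | [a], _, b => by simp
  | a :: c :: t, _, b => by
    have ih := zipTail_append_singleton (c :: t) (by simp) b
    simp only [List.cons_append, List.tail_cons] at ih ⊢
    rw [List.zip_cons_cons, ih, List.zip_cons_cons]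
    simp [List.getLast]

lemma pword_append_singleton (l : List (Fin N)) (h : l ≠ []) (b : Fin N) :
    pword P (l ++ [b]) = pword P l * P (l.getLast h) b := by
  unfold pword
  rw [zipTail_append_singleton l h b]
  simp

lemma esum_append_singleton (l : List (Fin N)) (h : l ≠ []) (b : Fin N) :
    esum G (l ++ [b]) = esum G l + G (l.getLast h) b := by
  unfold esum
  rw [zipTail_append_singleton l h b]
  simp

lemma esum_const (r : ℝ) (l : List (Fin N)) :
    esum (fun _ _ => r) l = (l.length - 1 : ℕ) * r := by
  unfold esum
  rw [List.map_const', List.sum_replicate, List.length_zip, List.length_tail]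
  simp [min_eq_right, Nat.sub_le, nsmul_eq_mul]

end lists

section lists2
variable {N : ℕ} {P : Matrix (Fin N) (Fin N) ℝ} {G : Fin N → Fin N → ℝ}

lemma prod01 : ∀ L : List ℝ, (∀ x ∈ L, 0 ≤ x ∧ x ≤ 1) → 0 ≤ L.prod ∧ L.prod ≤ 1
  | [], _ => by simp
  | x :: L, h => by
    have hx := h x (by simp)
    have ih := prod01 L (fun y hy => h y (by simp [hy]))
    simp only [List.prod_cons]
    constructor
    · exact mul_nonneg hx.1 ih.1
    · calc x * L.prod ≤ 1 * 1 := by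
            apply mul_le_mul hx.2 ih.2 ih.1 zero_le_one
        _ = 1 := by ring

lemma pword_mem01 (hnn : ∀ i j, 0 ≤ P i j) (h1 : ∀ i j, P i j ≤ 1)
    (l : List (Fin N)) : 0 ≤ pword P l ∧ pword P l ≤ 1 := by
  apply prod01
  intro x hx
  simp only [List.mem_map] at hx
  obtain ⟨ab, -, rfl⟩ := hx
  exact ⟨hnn _ _, h1 _ _⟩

lemma pword_take_drop : ∀ (k : ℕ) (l : List (Fin N)),
    pword P l = pword P (l.take (k+1)) * pword P (l.drop k)
  | 0, l => by
    cases l with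
    | nil => simp
    | cons a t => simp
  | (k+1), l => by
    cases l with
    | nil => simp
    | cons a t =>
      cases t with
      | nil => simp
      | cons b t' =>
        have ih := pword_take_drop k (b :: t')
        rw [List.drop_succ_cons, List.take_succ_cons, List.take_succ_cons,
          pword_cons_cons, pword_cons_cons, ih, List.take_succ_cons]
        ring

lemma pword_pos : ∀ (l : List (Fin N)), (l.Chain' fun a b => 0 < P a b) →
    0 < pword P l
  | [], _ => by simp
  | [a], _ => by simp
  | a :: b :: t, h => by
    simp only [List.Chain', List.isChain_cons_cons] at h
    rw [pword_cons_cons]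
    exact mul_pos h.1 (pword_pos (b :: t) h.2)

lemma log_pword : ∀ (l : List (Fin N)), (l.Chain' fun a b => 0 < P a b) →
    Real.log (pword P l) = esum (fun a b => Real.log (P a b)) l
  | [], _ => by simp
  | [a], _ => by simp
  | a :: b :: t, h => by
    simp only [List.Chain', List.isChain_cons_cons] at h
    rw [pword_cons_cons, esum_cons_cons, Real.log_mul (ne_of_gt h.1)
      (ne_of_gt (pword_pos (b :: t) h.2)), log_pword (b :: t) h.2]

lemma esum_sub (G₁ G₂ : Fin N → Fin N → ℝ) (l : List (Fin N)) :
    esum (fun a b => G₁ a b - G₂ a b) l = esum G₁ l - esum G₂ l := by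
  unfold esum
  induction (l.zip l.tail) with
  | nil => simp
  | cons x L ih => simp only [List.map_cons, List.sum_cons, ih]; ring

end lists2

section lists3
variable {N : ℕ} {P : Matrix (Fin N) (Fin N) ℝ}

lemma adm_append_singleton_iff (l : List (Fin N)) (h : l ≠ []) (b : Fin N) :
    adm P (l ++ [b]) ↔ adm P l ∧ 0 < P (l.getLast h) b := by
  unfold adm
  simp only [List.Chain']
  rw [List.isChain_append]
  constructor
  · rintro ⟨-, h1, h2, h3⟩
    exact ⟨⟨h, h1⟩, h3 _ (List.getLast?_eq_getLast h ▸ rfl) b rfl⟩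
  · rintro ⟨⟨-, h1⟩, h2⟩
    refine ⟨by simp, h1, List.isChain_singleton _, ?_⟩
    intro x hx y hy
    rw [List.getLast?_eq_getLast h] at hx
    simp at hx hy
    rw [← hx, ← hy]
    exact h2

lemma adm_dropLast (l : List (Fin N)) (hl : adm P l) (h2 : 2 ≤ l.length) :
    adm P l.dropLast := by
  refine ⟨?_, hl.2.prefix (List.dropLast_prefix l)⟩
  have : l.dropLast.length = l.length - 1 := List.length_dropLast
  intro he
  rw [he] at this
  simp at this
  omega

lemma adm_drop (l : List (Fin N)) (hl : adm P l) (k : ℕ) (hk : k < l.length) :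
    adm P (l.drop k) := by
  refine ⟨?_, hl.2.suffix (List.drop_suffix k l)⟩
  intro he
  have := congrArg List.length he
  simp at this
  omega

lemma adm_take (l : List (Fin N)) (hl : adm P l) (k : ℕ) (hk : 1 ≤ k) :
    adm P (l.take k) := by
  refine ⟨?_, hl.2.prefix (List.take_prefix k l)⟩
  intro he
  have := congrArg List.length he
  simp at this
  rcases this with h | h
  · omega
  · exact hl.1 h

lemma mlist_eq (a : Fin N) (l : List (Fin N)) (q : Fin N → ℝ) :
    mlist q P (a :: l) = q a * pword P (a :: l) := by
  simp [mlist]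

lemma mlist_append_singleton (l : List (Fin N)) (h : l ≠ []) (b : Fin N) (q : Fin N → ℝ) :
    mlist q P (l ++ [b]) = mlist q P l * P (l.getLast h) b := by
  obtain ⟨a, t, rfl⟩ := List.exists_cons_of_ne_nil h
  rw [List.cons_append, mlist_eq, mlist_eq, ← List.cons_append,
    pword_append_singleton P _ h]
  ring

lemma mlist_nonneg (hnn : ∀ i j, 0 ≤ P i j) (h1 : ∀ i j, P i j ≤ 1)
    (q : Fin N → ℝ) (hq : ∀ i, 0 < q i) (l : List (Fin N)) : 0 ≤ mlist q P l := by
  cases l with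
  | nil =>
    simp only [mlist, pword, List.map_nil, List.headI]
    norm_num [Inhabited.default]
  | cons a t => rw [mlist_eq]; exact mul_nonneg (hq a).le (pword_mem01 hnn h1 _).1

end lists3

section markov
variable {N : ℕ} {P : Matrix (Fin N) (Fin N) ℝ}

lemma pow_entry_nonneg (hnn : ∀ i j, 0 ≤ P i j) (m : ℕ) :
    ∀ i j, 0 ≤ (P ^ m) i j := by
  induction m with
  | zero =>
    intro i j
    simp [Matrix.one_apply]
    split <;> norm_num
  | succ m ih =>
    intro i j
    rw [pow_succ, Matrix.mul_apply]
    exact Finset.sum_nonneg fun k _ => mul_nonneg (ih i k) (hnn k j)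

lemma pow_rowsum (hrow : ∀ i, ∑ j, P i j = 1) (m : ℕ) :
    ∀ i, ∑ j, (P ^ m) i j = 1 := by
  induction m with
  | zero => intro i; simp [Matrix.one_apply]
  | succ m ih =>
    intro i
    simp only [pow_succ, Matrix.mul_apply]
    rw [Finset.sum_comm]
    calc ∑ k, ∑ j, (P ^ m) i k * P k j = ∑ k, (P ^ m) i k * ∑ j, P k j := by
          simp [Finset.mul_sum]
      _ = 1 := by simp [hrow, ih i]

lemma det_row (hnn : ∀ i j, 0 ≤ P i j) (hrow : ∀ i, ∑ j, P i j = 1)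
    {x y : Fin N} (hxy : P x y = 1) {z : Fin N} (hz : z ≠ y) : P x z = 0 := by
  have herase : ∑ w ∈ Finset.univ.erase y, P x w = 0 := by
    have := Finset.add_sum_erase Finset.univ (P x) (Finset.mem_univ y)
    rw [hrow x, hxy] at this
    linarith
  have := (Finset.sum_eq_zero_iff_of_nonneg (fun w _ => hnn x w)).mp herase z
  exact this (Finset.mem_erase.mpr ⟨hz, Finset.mem_univ z⟩)

lemma exists_pos_of_sum_pos {s : Finset (Fin N)} {f : Fin N → ℝ}
    (h : 0 < ∑ w ∈ s, f w) : ∃ w ∈ s, 0 < f w := by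
  by_contra hc
  push_neg at hc
  have : ∑ w ∈ s, f w ≤ 0 := Finset.sum_nonpos fun w hw => hc w hw
  linarith

lemma mod_succ' (k d : ℕ) (hd : 0 < d) :
    (k+1) % d = if k % d + 1 = d then 0 else k % d + 1 := by
  have hr : k % d < d := Nat.mod_lt _ hd
  rcases Nat.lt_or_ge 1 d with h2 | h2
  · rw [Nat.add_mod, Nat.mod_eq_of_lt h2]
    split
    · next h => rw [h, Nat.mod_self]
    · next h => exact Nat.mod_eq_of_lt (by omega)
  · have hd1 : d = 1 := by omega
    subst hd1
    simp [Nat.mod_one]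

/-- No all-weight-1 path of length N+1 when some entry is in (0,1). -/
lemma no_one_path (hnn : ∀ i j, 0 ≤ P i j) (hrow : ∀ i, ∑ j, P i j = 1)
    (hirr : ∀ i j, ∃ m, 1 ≤ m ∧ 0 < (P ^ m) i j)
    {a b : Fin N} (hab : 0 < P a b) (hab1 : P a b < 1)
    (g : ℕ → Fin N) (hg : ∀ k < N, P (g k) (g (k+1)) = 1) : False := by
  have hcard : Fintype.card (Fin N) < Fintype.card (Fin (N + 1)) := by simp
  obtain ⟨x, y, hxy, hgxy⟩ :=
    Fintype.exists_ne_map_eq_of_card_lt (fun k : Fin (N+1) => g k) hcard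
  wlog hlt : (x : ℕ) < (y : ℕ) generalizing x y
  · refine this y x hxy.symm hgxy.symm ?_
    have hne : (x : ℕ) ≠ (y : ℕ) := fun h => hxy (Fin.val_injective h)
    omega
  set i := (x : ℕ)
  set d := (y : ℕ) - i with hd
  have hd1 : 1 ≤ d := by omega
  have hij : i + d ≤ N := by omega
  have hclose : g (i + d) = g i := by
    have h' : i + d = (y : ℕ) := by omega
    rw [h']; exact hgxy.symm
  set π : ℕ → Fin N := fun k => g (i + k % d) with hπdef
  have hπ : ∀ k, P (π k) (π (k+1)) = 1 := by
    intro k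
    have hr : k % d < d := Nat.mod_lt _ (by omega)
    rw [hπdef]
    simp only
    rw [mod_succ' k d (by omega)]
    split
    · next h =>
      rw [Nat.add_zero]
      have he : i + (k % d + 1) = i + d := by omega
      rw [← hclose, ← he]
      exact hg _ (by omega)
    · next h =>
      have : i + (k % d + 1) = i + k % d + 1 := by omega
      rw [this]
      exact hg _ (by omega)
  have hdet : ∀ m z, 0 < (P ^ m) (π 0) z → z = π m := by
    intro m
    induction m with
    | zero =>
      intro z hz
      rw [pow_zero] at hz
      by_contra hne
      rw [Matrix.one_apply_ne (Ne.symm hne)] at hz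
      linarith
    | succ m ih =>
      intro z hz
      rw [pow_succ, Matrix.mul_apply] at hz
      obtain ⟨w, -, hw⟩ := exists_pos_of_sum_pos hz
      have hw1 : 0 < (P ^ m) (π 0) w := by
        rcases lt_or_eq_of_le (pow_entry_nonneg hnn m (π 0) w) with h | h
        · exact h
        · exfalso; rw [← h] at hw; linarith
      have hw2 : 0 < P w z := by
        rcases lt_or_eq_of_le (hnn w z) with h | h
        · exact h
        · exfalso; rw [← h] at hw; linarith
      have hwm := ih w hw1
      subst hwm
      by_contra hne
      have := det_row hnn hrow (hπ m) hne
      linarith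
  obtain ⟨m, -, hm⟩ := hirr (π 0) a
  have ha := hdet m a hm
  have h1 : P a (π (m+1)) = 1 := by rw [ha]; exact hπ m
  by_cases hb : b = π (m+1)
  · rw [← hb] at h1; linarith
  · have := det_row hnn hrow h1 hb
    linarith

end markov

section poisson
open Module
variable {N : ℕ} {P : Matrix (Fin N) (Fin N) ℝ}

lemma poisson (hN : 0 < N) (hnn : ∀ i j, 0 ≤ P i j) (hrow : ∀ i, ∑ j, P i j = 1)
    (hirr : ∀ i j, ∃ m, 1 ≤ m ∧ 0 < (P ^ m) i j)
    (v : Fin N → ℝ) (hv1 : ∑ i, v i = 1)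
    (hveig : ∀ j, ∑ i, v i * P i j = v j)
    (f : Fin N → ℝ) (hf : ∑ i, v i * f i = 0) :
    ∃ h : Fin N → ℝ, ∀ a, f a = h a - ∑ b, P a b * h b := by
  haveI : Nonempty (Fin N) := ⟨⟨0, hN⟩⟩
  set T : (Fin N → ℝ) →ₗ[ℝ] (Fin N → ℝ) := LinearMap.id - P.mulVecLin with hT
  have hTapp : ∀ h a, T h a = h a - ∑ b, P a b * h b := by
    intro h a
    simp [hT, Matrix.mulVecLin_apply, Matrix.mulVec, dotProduct]
  -- kernel is the constants
  have hker : LinearMap.ker T = Submodule.span ℝ {(fun _ => 1 : Fin N → ℝ)} := by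
    apply le_antisymm
    · intro h hh
      rw [LinearMap.mem_ker] at hh
      have heq : ∀ a, h a = ∑ b, P a b * h b := by
        intro a
        have h0 := congrFun hh a
        rw [hTapp] at h0
        simp only [Pi.zero_apply] at h0
        linarith
      have hpow : ∀ m a, h a = ∑ b, (P ^ m) a b * h b := by
        intro m
        induction m with
        | zero => intro a; simp [Matrix.one_apply]
        | succ m ih =>
          intro a
          rw [heq a]
          calc ∑ b, P a b * h b = ∑ b, P a b * ∑ z, (P ^ m) b z * h z := by
                apply Finset.sum_congr rfl; intro b _; rw [← ih b]
            _ = ∑ z, (∑ b, P a b * (P ^ m) b z) * h z := by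
                simp_rw [Finset.mul_sum]
                rw [Finset.sum_comm]
                apply Finset.sum_congr rfl; intro z _
                rw [Finset.sum_mul]
                apply Finset.sum_congr rfl; intro b _; ring
            _ = ∑ z, (P ^ (m+1)) a z * h z := by
                apply Finset.sum_congr rfl; intro z _
                rw [pow_succ']
                rw [Matrix.mul_apply]
      obtain ⟨a₀, -, hmax⟩ := Finset.exists_max_image Finset.univ h Finset.univ_nonempty
      have hconst : ∀ b, h b = h a₀ := by
        intro b
        obtain ⟨m, -, hm⟩ := hirr a₀ b
        have hzero : ∑ z, (P ^ m) a₀ z * (h a₀ - h z) = 0 := by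
          have h1 : ∑ z, (P ^ m) a₀ z * h a₀ = h a₀ := by
            rw [← Finset.sum_mul, pow_rowsum hrow m a₀, one_mul]
          have h2 := hpow m a₀
          calc ∑ z, (P ^ m) a₀ z * (h a₀ - h z)
              = ∑ z, ((P ^ m) a₀ z * h a₀ - (P ^ m) a₀ z * h z) := by
                apply Finset.sum_congr rfl; intro z _; ring
            _ = 0 := by rw [Finset.sum_sub_distrib, h1, ← h2]; ring
        have hterm := (Finset.sum_eq_zero_iff_of_nonneg (fun z _ =>
          mul_nonneg (pow_entry_nonneg hnn m a₀ z)
            (by linarith [hmax z (Finset.mem_univ z)]))).mp hzero b (Finset.mem_univ b)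
        have := mul_eq_zero.mp hterm
        rcases this with h | h
        · exact absurd h (ne_of_gt hm)
        · linarith
      apply Submodule.mem_span_singleton.mpr
      exact ⟨h a₀, by funext b; simp [hconst b]⟩
    · rw [Submodule.span_le]
      intro x hx
      simp only [Set.mem_singleton_iff] at hx
      subst hx
      rw [SetLike.mem_coe, LinearMap.mem_ker]
      funext a
      rw [hTapp]
      simp [hrow a]
  -- φv
  set φv : (Fin N → ℝ) →ₗ[ℝ] ℝ := ∑ i, v i • LinearMap.proj i with hφv
  have hφapp : ∀ x, φv x = ∑ i, v i * x i := by
    intro x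
    simp [hφv, LinearMap.sum_apply]
  have hφsurj : Function.Surjective φv := by
    intro r
    refine ⟨fun _ => r, ?_⟩
    rw [hφapp]
    rw [← Finset.sum_mul, hv1, one_mul]
  -- finrank computations
  have hrank1 : finrank ℝ (LinearMap.ker T) = 1 := by
    rw [hker]
    exact finrank_span_singleton (by
      intro h0
      have := congrFun h0 ⟨0, hN⟩
      simp at this)
  have htot : finrank ℝ (Fin N → ℝ) = N := by simp
  have hrn := LinearMap.finrank_range_add_finrank_ker T
  rw [hrank1, htot] at hrn
  have hrnφ := LinearMap.finrank_range_add_finrank_ker φv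
  have hφtop : LinearMap.range φv = ⊤ := LinearMap.range_eq_top.mpr hφsurj
  rw [hφtop, htot] at hrnφ
  have h1 : finrank ℝ (⊤ : Submodule ℝ ℝ) = 1 := by
    rw [finrank_top]; simp
  rw [h1] at hrnφ
  have hle : LinearMap.range T ≤ LinearMap.ker φv := by
    rintro x ⟨h, rfl⟩
    rw [LinearMap.mem_ker, hφapp]
    calc ∑ i, v i * T h i = ∑ i, (v i * h i - ∑ b, v i * (P i b * h b)) := by
          apply Finset.sum_congr rfl; intro i _
          rw [hTapp, mul_sub, Finset.mul_sum]
      _ = ∑ i, v i * h i - ∑ b, (∑ i, v i * P i b) * h b := by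
          rw [Finset.sum_sub_distrib, Finset.sum_comm]
          congr 1
          apply Finset.sum_congr rfl; intro b _
          rw [Finset.sum_mul]
          apply Finset.sum_congr rfl; intro i _; ring
      _ = 0 := by
          simp only [hveig]
          ring
  have heq : LinearMap.range T = LinearMap.ker φv :=
    Submodule.eq_of_le_of_finrank_le hle (by omega)
  have hfmem : f ∈ LinearMap.range T := by
    rw [heq, LinearMap.mem_ker, hφapp]
    exact hf
  obtain ⟨h, hh⟩ := hfmem
  exact ⟨h, fun a => by rw [← hh, hTapp]⟩

end poisson

open scoped Classical in
noncomputable def wordsF (N n : ℕ) : Finset (List (Fin N)) :=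
  (Finset.univ : Finset (Fin n → Fin N)).image List.ofFn

lemma mem_wordsF {N n : ℕ} (l : List (Fin N)) : l ∈ wordsF N n ↔ l.length = n := by
  constructor
  · intro hl
    simp only [wordsF, Finset.mem_image] at hl
    obtain ⟨f, -, rfl⟩ := hl
    exact List.length_ofFn
  · intro hl
    subst hl
    simp only [wordsF, Finset.mem_image]
    exact ⟨l.get, Finset.mem_univ _, List.ofFn_get l⟩

open scoped Classical in
noncomputable def cutF {N : ℕ} (P : Matrix (Fin N) (Fin N) ℝ) (pmin : ℝ)
    (j M : ℕ) : Finset (List (Fin N)) :=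
  ((Finset.range (M+1)).biUnion (wordsF N)).filter
    (fun l => adm P l ∧ pmin ^ j ≤ pword P l.dropLast ∧ pword P l < pmin ^ j)

open scoped Classical in
lemma mem_cutF {N : ℕ} {P : Matrix (Fin N) (Fin N) ℝ} {pmin : ℝ} {j M : ℕ}
    (l : List (Fin N)) : l ∈ cutF P pmin j M ↔ l.length ≤ M ∧
      (adm P l ∧ pmin ^ j ≤ pword P l.dropLast ∧ pword P l < pmin ^ j) := by
  simp only [cutF, Finset.mem_filter, Finset.mem_biUnion, Finset.mem_range, mem_wordsF]
  constructor
  · rintro ⟨⟨n, hn, rfl⟩, h2⟩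
    exact ⟨by omega, h2⟩
  · rintro ⟨h1, h2⟩
    exact ⟨⟨l.length, by omega, rfl⟩, h2⟩

section cut
open scoped Classical

variable {N : ℕ}

lemma getLastD_eq_getLast (l : List (Fin N)) (h : l ≠ []) (e₀ : Fin N) :
    l.getLastD e₀ = l.getLast h := by
  rw [List.getLastD_eq_getLast?, List.getLast?_eq_getLast h]
  rfl

lemma cut_identity (P : Matrix (Fin N) (Fin N) ℝ)
    (hnn : ∀ i j, 0 ≤ P i j) (h1e : ∀ i j, P i j ≤ 1) (hrow : ∀ i, ∑ j, P i j = 1)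
    (q : Fin N → ℝ)
    (pmin : ℝ) (j : ℕ) (hj : pmin ^ j < 1)
    (M : ℕ) (hM1 : 1 ≤ M)
    (hM : ∀ l : List (Fin N), adm P l → pmin ^ j ≤ pword P l → l.length < M)
    (G : Fin N → Fin N → ℝ) (h : Fin N → ℝ) (e₀ : Fin N)
    (hG : ∀ a, ∑ b, P a b * G a b = h a - ∑ b, P a b * h b) :
    ∑ σ ∈ cutF P pmin j M, mlist q P σ * (esum G σ + h (σ.getLastD e₀))
      = ∑ a, q a * h a := by
  set stopped : List (Fin N) → Prop := fun l =>
    adm P l ∧ pmin ^ j ≤ pword P l.dropLast ∧ pword P l < pmin ^ j with hstopdef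
  set alive : List (Fin N) → Prop := fun l => adm P l ∧ pmin ^ j ≤ pword P l
    with halivedef
  set Φ : List (Fin N) → ℝ := fun l =>
    mlist q P l * (esum G l + h (l.getLastD e₀)) with hΦdef
  set SL : ℕ → Finset (List (Fin N)) := fun n =>
    ((Finset.range (n+1)).biUnion (wordsF N)).filter stopped with hSLdef
  set AL : ℕ → Finset (List (Fin N)) := fun n => (wordsF N n).filter alive
    with hALdef
  set S : ℕ → ℝ := fun n => ∑ σ ∈ SL n, Φ σ + ∑ σ ∈ AL n, Φ σ with hSdef
  have mem_SL : ∀ n l, l ∈ SL n ↔ l.length ≤ n ∧ stopped l := by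
    intro n l
    simp only [hSLdef, Finset.mem_filter, Finset.mem_biUnion, Finset.mem_range,
      mem_wordsF]
    constructor
    · rintro ⟨⟨m, hm, rfl⟩, h2⟩; exact ⟨by omega, h2⟩
    · rintro ⟨h1, h2⟩; exact ⟨⟨l.length, by omega, rfl⟩, h2⟩
  have mem_AL : ∀ n l, l ∈ AL n ↔ l.length = n ∧ alive l := by
    intro n l
    simp only [hALdef, Finset.mem_filter, mem_wordsF] <;> tauto
  have no_short_stop : ∀ l, stopped l → 2 ≤ l.length := by
    intro l hl
    rcases hl with ⟨⟨hne, -⟩, -, hlt⟩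
    by_contra hc
    push_neg at hc
    interval_cases hh : l.length
    · exact hne (List.length_eq_zero_iff.mp hh)
    · obtain ⟨a, rfl⟩ := List.length_eq_one_iff.mp hh
      rw [pword_singleton] at hlt
      linarith
  have stop_len : ∀ l, stopped l → l.length ≤ M := by
    intro l hl
    have h2 := no_short_stop l hl
    have hd : adm P l.dropLast := adm_dropLast l hl.1 h2
    have := hM l.dropLast hd hl.2.1
    rw [List.length_dropLast] at this
    omega
  -- base case
  have hS1 : S 1 = ∑ a, q a * h a := by
    have hSL1 : SL 1 = ∅ := by
      apply Finset.eq_empty_of_forall_notMem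
      intro l hl
      rw [mem_SL] at hl
      have := no_short_stop l hl.2
      omega
    have hAL1 : AL 1 = wordsF N 1 := by
      apply Finset.filter_true_of_mem
      intro l hl
      rw [mem_wordsF] at hl
      obtain ⟨a, rfl⟩ := List.length_eq_one_iff.mp hl
      exact ⟨⟨List.cons_ne_nil a [], List.isChain_singleton a⟩,
        by rw [pword_singleton]; linarith⟩
    rw [hSdef]
    simp only [hSL1, Finset.sum_empty, hAL1, zero_add]
    rw [wordsF, Finset.sum_image (fun f _ g _ hfg => List.ofFn_injective hfg)]
    rw [Fintype.sum_equiv (Equiv.funUnique (Fin 1) (Fin N))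
      (fun f => Φ (List.ofFn f)) (fun a => q a * h a) ?_]
    intro f
    have hofn : List.ofFn f = [f 0] := by
      simp [List.ofFn_succ]
    rw [hofn, hΦdef]
    simp only [esum_singleton]
    rw [mlist_eq, pword_singleton]
    simp [Equiv.funUnique]
  -- one-step expansion
  have hchild : ∀ n, 1 ≤ n → ∀ l ∈ AL n, ∑ b, Φ (l ++ [b]) = Φ l := by
    intro n hn l hl
    rw [mem_AL] at hl
    have hne : l ≠ [] := by
      intro hc; rw [hc] at hl; simp at hl; omega
    have hlast : l.getLastD e₀ = l.getLast hne := getLastD_eq_getLast l hne e₀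
    have hstep : ∀ b, Φ (l ++ [b]) =
        mlist q P l * esum G l * P (l.getLast hne) b
        + mlist q P l * (P (l.getLast hne) b * G (l.getLast hne) b)
        + mlist q P l * (P (l.getLast hne) b * h b) := by
      intro b
      rw [hΦdef]
      simp only
      rw [mlist_append_singleton l hne, esum_append_singleton G l hne,
        List.getLastD_concat]
      ring
    calc ∑ b, Φ (l ++ [b])
        = ∑ b, (mlist q P l * esum G l * P (l.getLast hne) b
          + mlist q P l * (P (l.getLast hne) b * G (l.getLast hne) b)
          + mlist q P l * (P (l.getLast hne) b * h b)) :=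
          Finset.sum_congr rfl fun b _ => hstep b
      _ = mlist q P l * esum G l * (∑ b, P (l.getLast hne) b)
          + mlist q P l * (∑ b, P (l.getLast hne) b * G (l.getLast hne) b)
          + mlist q P l * (∑ b, P (l.getLast hne) b * h b) := by
          rw [Finset.sum_add_distrib, Finset.sum_add_distrib, ← Finset.mul_sum,
            ← Finset.mul_sum, ← Finset.mul_sum]
      _ = Φ l := by
          rw [hrow, hG, hΦdef]
          simp only
          rw [hlast]
          ring
  -- telescoping step
  have hstep : ∀ n, 1 ≤ n → S (n+1) = S n := by
    intro n hn
    set E : Finset (List (Fin N) × Fin N) := (AL n) ×ˢ Finset.univ with hE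
    have hinj : ∀ p ∈ E, ∀ p' ∈ E, p.1 ++ [p.2] = p'.1 ++ [p'.2] → p = p' := by
      intro p _ p' _ hpp
      obtain ⟨h1, h2⟩ := List.append_inj' hpp rfl
      have : p.2 = p'.2 := by
        have := h2; simp at this; exact this
      exact Prod.ext h1 this
    have hsum1 : ∑ p ∈ E, Φ (p.1 ++ [p.2]) = ∑ l ∈ AL n, Φ l := by
      rw [hE, Finset.sum_product]
      exact Finset.sum_congr rfl fun l hl => hchild n hn l hl
    have hsum2 : ∑ p ∈ E, Φ (p.1 ++ [p.2]) =
        ∑ σ ∈ E.image (fun p => p.1 ++ [p.2]), Φ σ := by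
      rw [Finset.sum_image hinj]
    -- ST (n+1)
    set ST : Finset (List (Fin N)) := (wordsF N (n+1)).filter stopped with hST
    have mem_ST : ∀ l, l ∈ ST ↔ l.length = n + 1 ∧ stopped l := by
      intro l; simp only [hST, Finset.mem_filter, mem_wordsF] <;> tauto
    have hsub : ST ∪ AL (n+1) ⊆ E.image (fun p => p.1 ++ [p.2]) := by
      intro σ hσ
      have hσlen : σ.length = n + 1 ∧ adm P σ ∧ pmin ^ j ≤ pword P σ.dropLast := by
        rcases Finset.mem_union.mp hσ with hσ | hσ
        · rw [mem_ST] at hσ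
          exact ⟨hσ.1, hσ.2.1, hσ.2.2.1⟩
        · rw [mem_AL] at hσ
          have h2 : 2 ≤ σ.length := by omega
          have hne : σ ≠ [] := hσ.2.1.1
          have hdne : σ.dropLast ≠ [] := by
            intro hc
            have := (List.length_dropLast : σ.dropLast.length = σ.length - 1)
            rw [hc] at this
            simp at this
            omega
          have hdrop : pword P σ ≤ pword P σ.dropLast := by
            conv_lhs => rw [← List.dropLast_append_getLast hne]
            rw [pword_append_singleton P σ.dropLast hdne]
            have h01 := pword_mem01 hnn h1e σ.dropLast
            nlinarith [hnn (σ.dropLast.getLast hdne) (σ.getLast hne),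
              h1e (σ.dropLast.getLast hdne) (σ.getLast hne)]
          exact ⟨hσ.1, hσ.2.1, le_trans hσ.2.2 hdrop⟩
      obtain ⟨hσl, hσa, hσd⟩ := hσlen
      have hne : σ ≠ [] := hσa.1
      have h2 : 2 ≤ σ.length := by omega
      have hdne : σ.dropLast ≠ [] := by
        intro hc
        have := (List.length_dropLast : σ.dropLast.length = σ.length - 1)
        rw [hc] at this; simp at this; omega
      refine Finset.mem_image.mpr ⟨⟨σ.dropLast, σ.getLast hne⟩, ?_, ?_⟩
      · rw [hE, Finset.mem_product]
        refine ⟨?_, Finset.mem_univ _⟩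
        rw [mem_AL]
        refine ⟨by rw [List.length_dropLast]; omega, adm_dropLast σ hσa h2, hσd⟩
      · exact List.dropLast_append_getLast hne
    have hdisj : Disjoint ST (AL (n+1)) := by
      rw [Finset.disjoint_left]
      intro l hl hl'
      rw [mem_ST] at hl
      rw [mem_AL] at hl'
      have := hl.2.2.2
      have := hl'.2.2
      linarith
    have hzero : ∀ σ ∈ E.image (fun p => p.1 ++ [p.2]),
        σ ∉ ST ∪ AL (n+1) → Φ σ = 0 := by
      intro σ hσ hnot
      obtain ⟨p, hp, rfl⟩ := Finset.mem_image.mp hσ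
      obtain ⟨l, b⟩ := p
      rw [hE, Finset.mem_product] at hp
      have hl : l ∈ AL n := hp.1
      replace hnot : (l ++ [b]) ∉ ST ∪ AL (n+1) := hnot
      show Φ (l ++ [b]) = 0
      rw [mem_AL] at hl
      have hlne : l ≠ [] := hl.2.1.1
      by_cases hpos : 0 < P (l.getLast hlne) b
      · exfalso
        have hadm : adm P (l ++ [b]) :=
          (adm_append_singleton_iff l hlne b).mpr ⟨hl.2.1, hpos⟩
        have hdl : (l ++ [b]).dropLast = l := List.dropLast_concat
        have hln := hl.1
        have hlen : (l ++ [b]).length = n + 1 := by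
          rw [List.length_append]; simp; omega
        rcases lt_or_ge (pword P (l ++ [b])) (pmin ^ j) with hlt | hge
        · exact (Finset.mem_union.mpr (Or.inl (by
            rw [mem_ST]
            exact ⟨hlen, hadm, by rw [hdl]; exact hl.2.2, hlt⟩))) |> hnot
        · exact (Finset.mem_union.mpr (Or.inr (by
            rw [mem_AL]
            exact ⟨hlen, hadm, hge⟩))) |> hnot
      · have hz : P (l.getLast hlne) b = 0 := by
          rcases lt_or_eq_of_le (hnn (l.getLast hlne) b) with hh | hh
          · exact absurd hh hpos
          · exact hh.symm
        rw [hΦdef]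
        simp only
        rw [mlist_append_singleton l hlne, hz, mul_zero, zero_mul]
    have hsum3 : ∑ σ ∈ E.image (fun p => p.1 ++ [p.2]), Φ σ =
        ∑ σ ∈ ST ∪ AL (n+1), Φ σ := by
      rw [eq_comm]
      apply Finset.sum_subset hsub
      intro σ hσ hnot
      exact hzero σ hσ hnot
    have hSLsplit : ∑ σ ∈ SL (n+1), Φ σ = ∑ σ ∈ SL n, Φ σ + ∑ σ ∈ ST, Φ σ := by
      have hSLeq : SL (n+1) = SL n ∪ ST := by
        apply Finset.ext
        intro l
        rw [Finset.mem_union, mem_SL, mem_SL, mem_ST]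
        constructor
        · rintro ⟨h1, h2⟩
          rcases Nat.lt_or_ge l.length (n+1) with hh | hh
          · exact Or.inl ⟨by omega, h2⟩
          · exact Or.inr ⟨by omega, h2⟩
        · rintro (⟨h1, h2⟩ | ⟨h1, h2⟩)
          · exact ⟨by omega, h2⟩
          · exact ⟨by omega, h2⟩
      have hdisj2 : Disjoint (SL n) ST := by
        rw [Finset.disjoint_left]
        intro l hl hl'
        rw [mem_SL] at hl
        rw [mem_ST] at hl'
        omega
      rw [hSLeq, Finset.sum_union hdisj2]
    rw [hSdef]
    simp only
    rw [hSLsplit, ← hsum1, hsum2, hsum3, Finset.sum_union hdisj]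
    ring
  -- constancy
  have hconst : ∀ n, 1 ≤ n → S n = ∑ a, q a * h a := by
    intro n hn
    induction n with
    | zero => omega
    | succ m ih =>
      rcases Nat.lt_or_ge m 1 with hm | hm
      · have : m = 0 := by omega
        subst this
        exact hS1
      · rw [hstep m hm]
        exact ih hm
  -- conclusion
  have hALM : AL M = ∅ := by
    apply Finset.eq_empty_of_forall_notMem
    intro l hl
    rw [mem_AL] at hl
    have := hM l hl.2.1 hl.2.2
    omega
  have hfin := hconst M hM1
  rw [hSdef] at hfin
  simp only [hALM, Finset.sum_empty, add_zero] at hfin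
  have hset : cutF P pmin j M = SL M := Finset.ext fun l => by
    rw [mem_cutF, mem_SL] <;> tauto
  rw [hset]
  exact hfin

end cut

section decay
variable {N : ℕ} {P : Matrix (Fin N) (Fin N) ℝ}

lemma pword_drop_cons (l : List (Fin N)) (i : ℕ) (hi : i + 1 < l.length) (e₀ : Fin N) :
    pword P (l.drop i) = P (l.getD i e₀) (l.getD (i+1) e₀) * pword P (l.drop (i+1)) := by
  rw [List.drop_eq_getElem_cons (by omega), List.drop_eq_getElem_cons hi,
    pword_cons_cons, List.getD_eq_getElem l e₀ (by omega), List.getD_eq_getElem l e₀ hi,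
    ← List.drop_eq_getElem_cons hi]

lemma pword_le_pow_decay (hnn : ∀ i j, 0 ≤ P i j) (h1e : ∀ i j, P i j ≤ 1)
    (hrow : ∀ i, ∑ j, P i j = 1)
    (hirr : ∀ i j, ∃ m, 1 ≤ m ∧ 0 < (P ^ m) i j)
    {a b : Fin N} (hab : 0 < P a b) (hab1 : P a b < 1)
    {p'' : ℝ} (hp0 : 0 < p'') (hp1 : p'' < 1)
    (hsmall : ∀ x y, 0 < P x y → P x y < 1 → P x y ≤ p'') :
    ∀ (L : ℕ) (l : List (Fin N)), l.length ≤ L → adm P l →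
      pword P l ≤ p'' ^ ((l.length - 1) / N) := by
  intro L
  induction L with
  | zero => intro l hl hadm; exact absurd (List.length_eq_zero_iff.mp (by omega)) hadm.1
  | succ L ih =>
    intro l hl hadm
    have hN : 0 < N := by
      rcases l with _ | ⟨x, t⟩
      · exact absurd rfl hadm.1
      · exact x.pos
    set e₀ : Fin N := ⟨0, hN⟩ with he₀
    rcases Nat.lt_or_ge l.length (N + 1) with hlen | hlen
    · have : (l.length - 1) / N = 0 := Nat.div_eq_of_lt (by omega)
      rw [this, pow_zero]
      exact (pword_mem01 hnn h1e l).2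
    -- long case
    · set l' := l.take (N+1) with hl'
      have hl'len : l'.length = N + 1 := by
        rw [hl', List.length_take]; omega
      have hl'adm : adm P l' := adm_take l hadm (N+1) (by omega)
      -- find a small edge among the first N transitions
      have hedge : ∀ k < N, 0 < P (l'.getD k e₀) (l'.getD (k+1) e₀) := by
        intro k hk
        have hc := List.isChain_iff_getElem.mp hl'adm.2 k (by omega)
        rw [List.getD_eq_getElem l' e₀ (by omega), List.getD_eq_getElem l' e₀ (by omega)]
        simpa using hc
      have hsm : ∃ k < N, P (l'.getD k e₀) (l'.getD (k+1) e₀) ≤ p'' := by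
        by_contra hcon
        push_neg at hcon
        refine no_one_path hnn hrow hirr hab hab1 (fun k => l'.getD k e₀) ?_
        intro k hk
        have h1 := hedge k hk
        have h2 := hcon k hk
        have h3 := h1e (l'.getD k e₀) (l'.getD (k+1) e₀)
        rcases lt_or_eq_of_le h3 with h4 | h4
        · exact absurd (hsmall _ _ h1 h4) (not_le.mpr h2)
        · exact h4
      obtain ⟨k, hk, hksm⟩ := hsm
      -- pword l' ≤ p''
      have hl'bound : pword P l' ≤ p'' := by
        have hsplit := pword_take_drop (P := P) k l'
        have hdc := pword_drop_cons (P := P) l' k (by omega) e₀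
        have h01a := pword_mem01 hnn h1e (l'.take (k+1))
        have h01b := pword_mem01 hnn h1e (l'.drop (k+1))
        rw [hdc] at hsplit
        rw [hsplit]
        have hPnn := hedge k hk
        have h5 : P (l'.getD k e₀) (l'.getD (k+1) e₀) * pword P (l'.drop (k+1)) ≤ p'' :=
          le_trans (mul_le_of_le_one_right (le_of_lt hPnn) h01b.2) hksm
        have h6 : 0 ≤ P (l'.getD k e₀) (l'.getD (k+1) e₀) * pword P (l'.drop (k+1)) :=
          mul_nonneg (le_of_lt hPnn) h01b.1
        calc pword P (l'.take (k+1)) * (P (l'.getD k e₀) (l'.getD (k+1) e₀) * pword P (l'.drop (k+1)))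
            ≤ 1 * p'' := mul_le_mul h01a.2 h5 h6 zero_le_one
          _ = p'' := one_mul _
      -- recursion on the tail
      have hdroplen : (l.drop N).length = l.length - N := List.length_drop
      have hdropadm : adm P (l.drop N) := adm_drop l hadm N (by omega)
      have hih := ih (l.drop N) (by omega) hdropadm
      have hsplit := pword_take_drop (P := P) N l
      have hexp : (l.length - 1) / N = ((l.drop N).length - 1) / N + 1 := by
        rw [hdroplen]
        rw [Nat.div_eq_sub_div hN (by omega : N ≤ l.length - 1)]
        have h9 : l.length - 1 - N = l.length - N - 1 := by omega
        rw [h9]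
      rw [hexp, pow_succ]
      have h01d := pword_mem01 hnn h1e (l.drop N)
      have hppow : (0:ℝ) ≤ p'' ^ (((l.drop N).length - 1) / N) := le_of_lt (pow_pos hp0 _)
      calc pword P l = pword P (l.take (N+1)) * pword P (l.drop N) := hsplit
        _ ≤ p'' * pword P (l.drop N) := by nlinarith [h01d.1]
        _ ≤ (p'' ^ (((l.drop N).length - 1) / N)) * p'' := by nlinarith
end decay

section aux2
variable {N : ℕ} {P : Matrix (Fin N) (Fin N) ℝ}

lemma pmin_pow_le_pword {pm : ℝ} (hpm : 0 < pm)
    (hple : ∀ a b, 0 < P a b → pm ≤ P a b) :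
    ∀ l : List (Fin N), (l.Chain' fun a b => 0 < P a b) →
      pm ^ (l.length - 1) ≤ pword P l
  | [], _ => by simp
  | [a], _ => by simp
  | a :: b :: tl, h => by
    simp only [List.Chain', List.isChain_cons_cons] at h
    have ih := pmin_pow_le_pword hpm hple (b :: tl) h.2
    rw [pword_cons_cons]
    have hlen : (a :: b :: tl).length - 1 = ((b :: tl).length - 1) + 1 := by
      simp
    rw [hlen, pow_succ]
    have h2 := hple a b h.1
    have h3 : (0:ℝ) < pm ^ ((b :: tl).length - 1) := pow_pos hpm _
    nlinarith [pword_pos (b :: tl) h.2]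

lemma pword_eq_one_of_deg (hdeg : ∀ a b, 0 < P a b → P a b = 1) :
    ∀ l : List (Fin N), (l.Chain' fun a b => 0 < P a b) → pword P l = 1
  | [], _ => by simp
  | [a], _ => by simp
  | a :: b :: tl, h => by
    simp only [List.Chain', List.isChain_cons_cons] at h
    rw [pword_cons_cons, hdeg a b h.1, pword_eq_one_of_deg hdeg (b :: tl) h.2, mul_one]

lemma headI_map (q : Fin N → ℝ) (l : List (Fin N)) (h : l ≠ []) :
    (l.map q).headI = q (l.head h) := by
  cases l with
  | nil => exact absurd rfl h
  | cons a t => rfl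

lemma log_mlist (q : Fin N → ℝ) (hq : ∀ i, 0 < q i) (l : List (Fin N))
    (hadm : adm P l) :
    Real.log (mlist q P l) = Real.log (q (l.head hadm.1))
      + esum (fun a b => Real.log (P a b)) l := by
  rw [mlist, headI_map q l hadm.1,
    Real.log_mul (ne_of_gt (hq (l.head hadm.1))) (ne_of_gt (pword_pos l hadm.2)),
    log_pword l hadm.2]

lemma mlist_eq_head (q : Fin N → ℝ) (l : List (Fin N)) (h : l ≠ []) :
    mlist q P l = q (l.head h) * pword P l := by
  rw [mlist, headI_map q l h]

lemma abs_le_sum_abs (u : Fin N → ℝ) (x : Fin N) : |u x| ≤ ∑ a, |u a| :=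
  Finset.single_le_sum (fun a _ => abs_nonneg (u a)) (Finset.mem_univ x)

end aux2
lemma center_sum {N : ℕ} (v f : Fin N → ℝ) (hv1 : ∑ i, v i = 1) :
    ∑ i, v i * (f i - (∑ i', v i' * f i')) = 0 := by
  simp_rw [mul_sub]
  rw [Finset.sum_sub_distrib, ← Finset.sum_mul, hv1, one_mul, sub_self]

set_option maxHeartbeats 4000000 in
theorem stmt10 {N : ℕ} (P c : Matrix (Fin N) (Fin N) ℝ)
    (hnn : ∀ i j, 0 ≤ P i j) (hrow : ∀ i, ∑ j, P i j = 1)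
    (hirr : ∀ i j, ∃ m, 1 ≤ m ∧ 0 < (P ^ m) i j)
    (hc : ∀ i j, 0 < P i j → 0 < c i j ∧ c i j < 1)
    (hc0 : ∀ i j, P i j = 0 → c i j = 0)
    (q : Fin N → ℝ) (hq : ∀ i, 0 < q i) (hq1 : ∑ i, q i = 1)
    (v : Fin N → ℝ) (hvpos : ∀ i, 0 < v i) (hv1 : ∑ i, v i = 1)
    (hveig : ∀ j, ∑ i, v i * P i j = v j)
    (pmin : ℝ) (hpmin : pmin = sInf {x : ℝ | ∃ i j, 0 < P i j ∧ P i j = x})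
    (Λ : ℕ → Set (List (Fin N)))
    (hΛ : ∀ j, Λ j = {l | adm P l ∧
      pmin ^ j ≤ pword P l.dropLast ∧ pword P l < pmin ^ j})
    (t : ℕ → ℝ)
    (ht : ∀ j, t j = (∑ᶠ σ ∈ Λ j, mlist q P σ * Real.log (mlist q P σ)) /
                     (∑ᶠ σ ∈ Λ j, mlist q P σ * Real.log (pword c σ)))
    (s0 : ℝ)
    (hs0 : s0 = (∑ i, v i * ∑ j, P i j * Real.log (P i j)) /
                (∑ i, v i * ∑ j, P i j * Real.log (c i j))) :
    ∃ C4 : ℝ, ∃ J : ℕ, ∀ j : ℕ, J ≤ j →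
      |t j - s0| < C4 / (j : ℝ) := by
  classical
  rcases Nat.eq_zero_or_pos N with hN0 | hN
  · subst hN0
    simp at hq1
  haveI : Inhabited (Fin N) := ⟨⟨0, hN⟩⟩
  have e₀ : Fin N := ⟨0, hN⟩
  have h1e : ∀ i j, P i j ≤ 1 := by
    intro i j
    have := Finset.single_le_sum (f := P i) (fun k _ => hnn i k) (Finset.mem_univ j)
    rw [hrow i] at this
    exact this
  have head_eq : ∀ (l : List (Fin N)) (h : l ≠ []), l.head h = l.headI := by
    intro l h
    cases l with
    | nil => exact absurd rfl h
    | cons a t => rfl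
  -- pmin facts
  have hSpfin : {x : ℝ | ∃ i j, 0 < P i j ∧ P i j = x}.Finite := by
    apply Set.Finite.subset (Set.finite_range (fun ij : Fin N × Fin N => P ij.1 ij.2))
    rintro x ⟨i, j, -, rfl⟩
    exact ⟨(i, j), rfl⟩
  have hSpne : {x : ℝ | ∃ i j, 0 < P i j ∧ P i j = x}.Nonempty := by
    obtain ⟨jj, -, hjj⟩ := exists_pos_of_sum_pos (s := Finset.univ) (f := P e₀)
      (by rw [hrow]; norm_num)
    exact ⟨P e₀ jj, e₀, jj, hjj, rfl⟩
  have hpmem : pmin ∈ {x : ℝ | ∃ i j, 0 < P i j ∧ P i j = x} := by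
    rw [hpmin]
    exact Set.Nonempty.csInf_mem hSpne hSpfin
  obtain ⟨i₀, j₀, hij₀, hpeq⟩ := hpmem
  have hp0 : 0 < pmin := hpeq ▸ hij₀
  have hple : ∀ a b, 0 < P a b → pmin ≤ P a b := fun a b h =>
    hpmin ▸ csInf_le hSpfin.bddBelow ⟨a, b, h, rfl⟩
  have hp1 : pmin ≤ 1 := hpeq ▸ h1e i₀ j₀
  by_cases hdeg : ∀ a b, 0 < P a b → P a b = 1
  · -- degenerate permutation case
    refine ⟨1, 1, ?_⟩
    intro j hj
    have hpm1 : pmin = 1 := by rw [← hpeq]; exact hdeg _ _ hij₀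
    have hΛempty : Λ j = ∅ := by
      rw [hΛ j]
      apply Set.eq_empty_iff_forall_notMem.mpr
      rintro l ⟨hadm, -, hlt⟩
      rw [pword_eq_one_of_deg hdeg l hadm.2, hpm1, one_pow] at hlt
      linarith
    have ht0 : t j = 0 := by
      rw [ht j, hΛempty]
      simp
    have hs00 : s0 = 0 := by
      rw [hs0]
      have hz : ∀ i, ∑ jj, P i jj * Real.log (P i jj) = 0 := by
        intro i
        apply Finset.sum_eq_zero
        intro jj _
        rcases lt_or_eq_of_le (hnn i jj) with h | h
        · rw [hdeg i jj h, Real.log_one, mul_zero]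
        · rw [← h, zero_mul]
      simp [hz]
    rw [ht0, hs00]
    simp only [sub_zero, abs_zero]
    apply div_pos one_pos
    exact_mod_cast Nat.pos_of_ne_zero (by omega)
  -- nondegenerate case
  push_neg at hdeg
  obtain ⟨a₀, b₀, hpos₀, hne₀⟩ := hdeg
  have hlt₀ : P a₀ b₀ < 1 := lt_of_le_of_ne (h1e _ _) hne₀
  -- the largest sub-1 entry
  have hSsmne : ((Finset.univ ×ˢ Finset.univ : Finset (Fin N × Fin N)).filter
      (fun ab => 0 < P ab.1 ab.2 ∧ P ab.1 ab.2 < 1)).Nonempty :=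
    ⟨(a₀, b₀), by simp [hpos₀, hlt₀]⟩
  obtain ⟨p'', hp''def⟩ : ∃ x, x = ((Finset.univ ×ˢ Finset.univ : Finset (Fin N × Fin N)).filter
      (fun ab => 0 < P ab.1 ab.2 ∧ P ab.1 ab.2 < 1)).sup' hSsmne (fun ab => P ab.1 ab.2) :=
    ⟨_, rfl⟩
  have hsmall : ∀ x y, 0 < P x y → P x y < 1 → P x y ≤ p'' := by
    intro x y h1 h2
    rw [hp''def]
    exact Finset.le_sup' (f := fun ab : Fin N × Fin N => P ab.1 ab.2)
      (by simp [h1, h2] : (x, y) ∈ _)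
  have hp''0 : 0 < p'' := lt_of_lt_of_le hpos₀ (hsmall _ _ hpos₀ hlt₀)
  have hp''1 : p'' < 1 := by
    rw [hp''def]
    rw [Finset.sup'_lt_iff]
    intro ab hab
    simp only [Finset.mem_filter] at hab
    exact hab.2.2
  have hpm1 : pmin < 1 := lt_of_le_of_lt (hple _ _ hpos₀) hlt₀
  -- Abbreviations
  obtain ⟨Sv, hSv⟩ : ∃ S, S = ∑ i, v i * ∑ b, P i b * Real.log (P i b) := ⟨_, rfl⟩
  obtain ⟨Lv, hLv⟩ : ∃ L, L = ∑ i, v i * ∑ b, P i b * Real.log (c i b) := ⟨_, rfl⟩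
  -- Poisson solutions
  obtain ⟨hP, hhP⟩ := poisson hN hnn hrow hirr v hv1 hveig
    (fun a => (∑ b, P a b * Real.log (P a b)) - Sv) (by
      rw [hSv]
      exact center_sum v (fun i => ∑ b, P i b * Real.log (P i b)) hv1)
  obtain ⟨hC, hhC⟩ := poisson hN hnn hrow hirr v hv1 hveig
    (fun a => (∑ b, P a b * Real.log (c a b)) - Lv) (by
      rw [hLv]
      exact center_sum v (fun i => ∑ b, P i b * Real.log (c i b)) hv1)
  -- continue
  have hGP : ∀ a, ∑ b, P a b * (Real.log (P a b) - Sv)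
      = hP a - ∑ b, P a b * hP b := by
    intro a
    have h2 := hhP a
    have h3 : ∑ b, P a b * (Real.log (P a b) - Sv)
        = (∑ b, P a b * Real.log (P a b)) - Sv := by
      simp_rw [mul_sub]
      rw [Finset.sum_sub_distrib, ← Finset.sum_mul, hrow a, one_mul]
    rw [h3, h2]
  have hGc : ∀ a, ∑ b, P a b * (Real.log (c a b) - Lv)
      = hC a - ∑ b, P a b * hC b := by
    intro a
    have h2 := hhC a
    have h3 : ∑ b, P a b * (Real.log (c a b) - Lv)
        = (∑ b, P a b * Real.log (c a b)) - Lv := by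
      simp_rw [mul_sub]
      rw [Finset.sum_sub_distrib, ← Finset.sum_mul, hrow a, one_mul]
    rw [h3, h2]
  have hG0 : ∀ a : Fin N, ∑ b, P a b * (0:ℝ) = 1 - ∑ b, P a b * (1:ℝ) := by
    intro a
    simp [hrow a]
  -- Lv < 0
  have hφcneg : ∀ i, ∑ b, P i b * Real.log (c i b) < 0 := by
    intro i
    obtain ⟨jj, -, hjj⟩ := exists_pos_of_sum_pos (s := Finset.univ) (f := P i)
      (by rw [hrow]; norm_num)
    calc ∑ b, P i b * Real.log (c i b) < ∑ _b : Fin N, (0:ℝ) := by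
          apply Finset.sum_lt_sum
          · intro b _
            rcases lt_or_eq_of_le (hnn i b) with h | h
            · have hcb := hc i b h
              have hlog := Real.log_neg hcb.1 hcb.2
              exact mul_nonpos_of_nonneg_of_nonpos (hnn i b) hlog.le
            · rw [← h, zero_mul]
          · refine ⟨jj, Finset.mem_univ _, ?_⟩
            have hcb := hc i jj hjj
            exact mul_neg_of_pos_of_neg hjj (Real.log_neg hcb.1 hcb.2)
      _ = 0 := Finset.sum_const_zero
  have hLneg : Lv < 0 := by
    rw [hLv]
    calc ∑ i, v i * ∑ b, P i b * Real.log (c i b) < ∑ _i : Fin N, (0:ℝ) := by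
          apply Finset.sum_lt_sum
          · intro i _
            exact (mul_neg_of_pos_of_neg (hvpos i) (hφcneg i)).le
          · exact ⟨e₀, Finset.mem_univ _,
              mul_neg_of_pos_of_neg (hvpos e₀) (hφcneg e₀)⟩
      _ = 0 := Finset.sum_const_zero
  have hLne : Lv ≠ 0 := ne_of_lt hLneg
  -- constants
  obtain ⟨Kq, hKq⟩ : ∃ x : ℝ, x = ∑ a, |Real.log (q a)| := ⟨_, rfl⟩
  obtain ⟨HP, hHP⟩ : ∃ x : ℝ, x = ∑ a, |hP a| := ⟨_, rfl⟩
  obtain ⟨HC, hHC⟩ : ∃ x : ℝ, x = ∑ a, |hC a| := ⟨_, rfl⟩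
  have hKq0 : 0 ≤ Kq := hKq ▸ Finset.sum_nonneg (fun a _ => abs_nonneg _)
  have hHP0 : 0 ≤ HP := hHP ▸ Finset.sum_nonneg (fun a _ => abs_nonneg _)
  have hHC0 : 0 ≤ HC := hHC ▸ Finset.sum_nonneg (fun a _ => abs_nonneg _)
  obtain ⟨CA, hCAdef⟩ : ∃ x : ℝ, x = Kq + 2*HP := ⟨_, rfl⟩
  obtain ⟨CB, hCBdef⟩ : ∃ x : ℝ, x = 2*HC := ⟨_, rfl⟩
  have hCA0 : 0 ≤ CA := by rw [hCAdef]; linarith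
  have hCB0 : 0 ≤ CB := by rw [hCBdef]; linarith
  obtain ⟨δ, hδdef⟩ : ∃ x : ℝ, x = -Lv := ⟨_, rfl⟩
  have hδ : 0 < δ := by rw [hδdef]; linarith
  obtain ⟨C₅, hC₅⟩ : ∃ x : ℝ, x = (|Lv| * CA + |Sv| * CB) / (|Lv| * (δ/2)) := ⟨_, rfl⟩
  have hC₅0 : 0 ≤ C₅ := by
    rw [hC₅]
    apply div_nonneg
    · exact add_nonneg (mul_nonneg (abs_nonneg Lv) hCA0)
        (mul_nonneg (abs_nonneg Sv) hCB0)
    · exact mul_nonneg (abs_nonneg Lv) (by linarith)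
  have hq_le1 : ∀ a, q a ≤ 1 := by
    intro a
    have := Finset.single_le_sum (f := q) (fun k _ => (hq k).le) (Finset.mem_univ a)
    rw [hq1] at this
    exact this
  have tri : ∀ x y : ℝ, |x - y| ≤ |x| + |y| := by
    intro x y
    rw [sub_eq_add_neg]
    exact (abs_add_le x (-y)).trans (by rw [abs_neg])
  refine ⟨C₅ + 1, Nat.ceil (2*CB/δ) + 1, ?_⟩
  intro j hjJ
  have hj1 : 1 ≤ j := by omega
  have hjpos : (0:ℝ) < j := by exact_mod_cast Nat.pos_of_ne_zero (by omega)
  have hjR : 2*CB/δ ≤ (j:ℝ) := by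
    have h1 := Nat.le_ceil (2*CB/δ)
    have h2 : ((Nat.ceil (2*CB/δ) : ℕ) : ℝ) ≤ (j:ℝ) := by
      exact_mod_cast le_trans (Nat.le_succ _) hjJ
    linarith
  -- the length bound M
  have hpj1 : pmin ^ j < 1 := pow_lt_one₀ hp0.le hpm1 (by omega)
  obtain ⟨K, hK⟩ := exists_pow_lt_of_lt_one (pow_pos hp0 j) hp''1
  have hM : ∀ l : List (Fin N), adm P l → pmin ^ j ≤ pword P l →
      l.length < K*N + 2 := by
    intro l hadm hpw
    by_contra hcon
    push_neg at hcon
    have hdec := pword_le_pow_decay hnn h1e hrow hirr hpos₀ hlt₀ hp''0 hp''1 hsmall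
      l.length l (le_refl _) hadm
    have hKle : K ≤ (l.length - 1)/N := by
      rw [Nat.le_div_iff_mul_le hN]
      omega
    have h5 : p'' ^ ((l.length-1)/N) ≤ p'' ^ K :=
      pow_le_pow_of_le_one hp''0.le hp''1.le hKle
    linarith
  -- cut identities
  have hid0 := cut_identity P hnn h1e hrow q pmin j hpj1 (K*N+2) (by omega) hM
    (fun _ _ => (0:ℝ)) (fun _ => (1:ℝ)) e₀ hG0
  have hidP := cut_identity P hnn h1e hrow q pmin j hpj1 (K*N+2) (by omega) hM
    (fun a b => Real.log (P a b) - Sv) hP e₀ hGP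
  have hidC := cut_identity P hnn h1e hrow q pmin j hpj1 (K*N+2) (by omega) hM
    (fun a b => Real.log (c a b) - Lv) hC e₀ hGc
  obtain ⟨FF, hFF⟩ : ∃ F, F = cutF P pmin j (K*N+2) := ⟨_, rfl⟩
  rw [← hFF] at hid0 hidP hidC
  have hmemF : ∀ σ ∈ FF, adm P σ ∧ pmin ^ j ≤ pword P σ.dropLast ∧
      pword P σ < pmin ^ j := by
    intro σ hσ
    rw [hFF] at hσ
    exact ((mem_cutF σ).mp hσ).2
  -- mass
  have hmass : ∑ σ ∈ FF, mlist q P σ = 1 := by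
    calc ∑ σ ∈ FF, mlist q P σ
        = ∑ σ ∈ FF, mlist q P σ * (esum (fun _ _ => (0:ℝ)) σ + 1) := by
          apply Finset.sum_congr rfl
          intro σ _
          rw [esum_const, mul_zero, zero_add, mul_one]
      _ = ∑ a, q a * 1 := hid0
      _ = 1 := by simp [hq1]
  have hm0 : ∀ σ ∈ FF, 0 ≤ mlist q P σ := fun σ _ => mlist_nonneg hnn h1e q hq σ
  -- T
  obtain ⟨T, hT⟩ : ∃ x : ℝ, x = ∑ σ ∈ FF, mlist q P σ * ((σ.length - 1 : ℕ) : ℝ) :=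
    ⟨_, rfl⟩
  have hlenlow : ∀ σ ∈ FF, j + 1 ≤ σ.length - 1 := by
    intro σ hσ
    obtain ⟨hadm, hd, hlt⟩ := hmemF σ hσ
    have hsand := pmin_pow_le_pword hp0 hple σ hadm.2
    by_contra hcon
    push_neg at hcon
    have h6 : pmin ^ j ≤ pmin ^ (σ.length - 1) :=
      pow_le_pow_of_le_one hp0.le hp1 (by omega)
    linarith
  have hTge : (j:ℝ) + 1 ≤ T := by
    rw [hT]
    calc (j:ℝ) + 1 = ∑ σ ∈ FF, mlist q P σ * ((j:ℝ)+1) := by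
          rw [← Finset.sum_mul, hmass, one_mul]
      _ ≤ ∑ σ ∈ FF, mlist q P σ * ((σ.length - 1 : ℕ) : ℝ) := by
          apply Finset.sum_le_sum
          intro σ hσ
          apply mul_le_mul_of_nonneg_left ?_ (hm0 σ hσ)
          have h7 := hlenlow σ hσ
          have hcast : ((j:ℝ)) + 1 = ((j+1 : ℕ):ℝ) := by push_cast; ring
          rw [hcast]
          exact_mod_cast h7
  -- R quantities
  obtain ⟨RP, hRP⟩ : ∃ x : ℝ, x = ∑ a, q a * hP a
      - ∑ σ ∈ FF, mlist q P σ * hP (σ.getLastD e₀) := ⟨_, rfl⟩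
  obtain ⟨RC, hRC⟩ : ∃ x : ℝ, x = ∑ a, q a * hC a
      - ∑ σ ∈ FF, mlist q P σ * hC (σ.getLastD e₀) := ⟨_, rfl⟩
  obtain ⟨Hd, hHd⟩ : ∃ x : ℝ, x = ∑ σ ∈ FF, mlist q P σ * Real.log (q σ.headI) :=
    ⟨_, rfl⟩
  -- numerator identity
  have hNum : ∑ σ ∈ FF, mlist q P σ * Real.log (mlist q P σ) = Hd + RP + Sv * T := by
    have hesum : ∀ σ ∈ FF, mlist q P σ * Real.log (mlist q P σ)
        = mlist q P σ * Real.log (q σ.headI)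
          + mlist q P σ * (esum (fun a b => Real.log (P a b) - Sv) σ + hP (σ.getLastD e₀))
          - mlist q P σ * hP (σ.getLastD e₀)
          + Sv * (mlist q P σ * ((σ.length - 1 : ℕ) : ℝ)) := by
      intro σ hσ
      obtain ⟨hadm, -, -⟩ := hmemF σ hσ
      rw [log_mlist q hq σ hadm, head_eq σ hadm.1]
      have hE : esum (fun a b => Real.log (P a b) - Sv) σ
          = esum (fun a b => Real.log (P a b)) σ - ((σ.length - 1 : ℕ):ℝ) * Sv := by
        rw [esum_sub (fun a b => Real.log (P a b)) (fun _ _ => Sv) σ, esum_const]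
      rw [hE]
      ring
    calc ∑ σ ∈ FF, mlist q P σ * Real.log (mlist q P σ)
        = ∑ σ ∈ FF, (mlist q P σ * Real.log (q σ.headI)
          + mlist q P σ * (esum (fun a b => Real.log (P a b) - Sv) σ + hP (σ.getLastD e₀))
          - mlist q P σ * hP (σ.getLastD e₀)
          + Sv * (mlist q P σ * ((σ.length - 1 : ℕ) : ℝ))) := Finset.sum_congr rfl hesum
      _ = Hd + RP + Sv * T := by
          rw [Finset.sum_add_distrib, Finset.sum_sub_distrib, Finset.sum_add_distrib,
            ← Finset.mul_sum, hidP, hHd, hRP, hT]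
          ring
  -- denominator identity
  have hDen : ∑ σ ∈ FF, mlist q P σ * Real.log (pword c σ) = RC + Lv * T := by
    have hesum : ∀ σ ∈ FF, mlist q P σ * Real.log (pword c σ)
        = mlist q P σ * (esum (fun a b => Real.log (c a b) - Lv) σ + hC (σ.getLastD e₀))
          - mlist q P σ * hC (σ.getLastD e₀)
          + Lv * (mlist q P σ * ((σ.length - 1 : ℕ) : ℝ)) := by
      intro σ hσ
      obtain ⟨hadm, -, -⟩ := hmemF σ hσ
      have hchain : σ.Chain' fun a b => 0 < c a b :=
        hadm.2.imp (fun {a b} hab => (hc a b hab).1)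
      rw [log_pword (P := c) σ hchain]
      have hE : esum (fun a b => Real.log (c a b) - Lv) σ
          = esum (fun a b => Real.log (c a b)) σ - ((σ.length - 1 : ℕ):ℝ) * Lv := by
        rw [esum_sub (fun a b => Real.log (c a b)) (fun _ _ => Lv) σ, esum_const]
      rw [hE]
      ring
    calc ∑ σ ∈ FF, mlist q P σ * Real.log (pword c σ)
        = ∑ σ ∈ FF, (mlist q P σ * (esum (fun a b => Real.log (c a b) - Lv) σ + hC (σ.getLastD e₀))
          - mlist q P σ * hC (σ.getLastD e₀)
          + Lv * (mlist q P σ * ((σ.length - 1 : ℕ) : ℝ))) := Finset.sum_congr rfl hesum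
      _ = RC + Lv * T := by
          rw [Finset.sum_add_distrib, Finset.sum_sub_distrib,
            ← Finset.mul_sum, hidC, hRC, hT]
          try ring
  -- bounds
  have hHdbd : |Hd| ≤ Kq := by
    rw [hHd]
    calc |∑ σ ∈ FF, mlist q P σ * Real.log (q σ.headI)|
        ≤ ∑ σ ∈ FF, |mlist q P σ * Real.log (q σ.headI)| :=
          Finset.abs_sum_le_sum_abs _ _
      _ ≤ ∑ σ ∈ FF, mlist q P σ * Kq := by
          apply Finset.sum_le_sum
          intro σ hσ
          rw [abs_mul, abs_of_nonneg (hm0 σ hσ)]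
          apply mul_le_mul_of_nonneg_left ?_ (hm0 σ hσ)
          rw [hKq]
          exact abs_le_sum_abs (fun a => Real.log (q a)) σ.headI
      _ = Kq := by rw [← Finset.sum_mul, hmass, one_mul]
  have hsumbd : ∀ (u : Fin N → ℝ) (U : ℝ), U = ∑ a, |u a| →
      |∑ σ ∈ FF, mlist q P σ * u (σ.getLastD e₀)| ≤ U := by
    intro u U hU
    calc |∑ σ ∈ FF, mlist q P σ * u (σ.getLastD e₀)|
        ≤ ∑ σ ∈ FF, |mlist q P σ * u (σ.getLastD e₀)| :=
          Finset.abs_sum_le_sum_abs _ _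
      _ ≤ ∑ σ ∈ FF, mlist q P σ * U := by
          apply Finset.sum_le_sum
          intro σ hσ
          rw [abs_mul, abs_of_nonneg (hm0 σ hσ)]
          apply mul_le_mul_of_nonneg_left ?_ (hm0 σ hσ)
          rw [hU]
          exact abs_le_sum_abs u (σ.getLastD e₀)
      _ = U := by rw [← Finset.sum_mul, hmass, one_mul]
  have hqbd : ∀ (u : Fin N → ℝ) (U : ℝ), U = ∑ a, |u a| →
      |∑ a, q a * u a| ≤ U := by
    intro u U hU
    calc |∑ a, q a * u a| ≤ ∑ a, |q a * u a| := Finset.abs_sum_le_sum_abs _ _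
      _ ≤ ∑ a, |u a| := by
          apply Finset.sum_le_sum
          intro a _
          rw [abs_mul, abs_of_nonneg (hq a).le]
          exact mul_le_of_le_one_left (abs_nonneg (u a)) (hq_le1 a)
      _ = U := hU.symm
  have hRPbd : |RP| ≤ 2 * HP := by
    rw [hRP]
    have h1 := hqbd hP HP hHP
    have h2 := hsumbd hP HP hHP
    calc |∑ a, q a * hP a - ∑ σ ∈ FF, mlist q P σ * hP (σ.getLastD e₀)|
        ≤ |∑ a, q a * hP a| + |∑ σ ∈ FF, mlist q P σ * hP (σ.getLastD e₀)| := tri _ _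
      _ ≤ 2 * HP := by linarith
  have hRCbd : |RC| ≤ CB := by
    rw [hRC, hCBdef]
    have h1 := hqbd hC HC hHC
    have h2 := hsumbd hC HC hHC
    calc |∑ a, q a * hC a - ∑ σ ∈ FF, mlist q P σ * hC (σ.getLastD e₀)|
        ≤ |∑ a, q a * hC a| + |∑ σ ∈ FF, mlist q P σ * hC (σ.getLastD e₀)| := tri _ _
      _ ≤ 2 * HC := by linarith
  -- denominator estimates
  have hLvT : Lv * T ≤ Lv * ((j:ℝ)+1) := mul_le_mul_of_nonpos_left hTge hLneg.le
  have hCBj : CB ≤ δ/2 * j := by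
    have := (div_le_iff₀ hδ).mp hjR
    linarith
  have hDenle : RC + Lv * T ≤ -(δ/2) * j := by
    have h2 : RC ≤ CB := le_trans (le_abs_self RC) hRCbd
    have h8 : Lv * ((j:ℝ)+1) = -δ * ((j:ℝ)+1) := by rw [hδdef]; ring
    linarith [hLvT, hCBj, hδ, hjpos]
  have hDenneg : RC + Lv * T < 0 := lt_of_le_of_lt hDenle (by
    have h9 : 0 < δ/2 * (j:ℝ) := mul_pos (div_pos hδ (by norm_num)) hjpos
    linarith)
  have hDenne : RC + Lv * T ≠ 0 := ne_of_lt hDenneg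
  have hDenabs : (δ/2) * j ≤ |RC + Lv * T| := by
    rw [abs_of_neg hDenneg]
    linarith
  -- t j and s0
  have hsetΛ : Λ j = ↑FF := by
    rw [hΛ j, hFF]
    apply Set.ext
    intro l
    simp only [Set.mem_setOf_eq, Finset.mem_coe]
    rw [mem_cutF]
    constructor
    · rintro ⟨hadm, hd, hlt⟩
      refine ⟨?_, hadm, hd, hlt⟩
      have h2 : 2 ≤ l.length := by
        by_contra hcon
        push_neg at hcon
        interval_cases hle : l.length
        · exact hadm.1 (List.length_eq_zero_iff.mp hle)
        · obtain ⟨a, rfl⟩ := List.length_eq_one_iff.mp hle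
          rw [pword_singleton] at hlt
          linarith
      have hdadm : adm P l.dropLast := adm_dropLast l hadm h2
      have h3 := hM l.dropLast hdadm hd
      rw [List.length_dropLast] at h3
      omega
    · rintro ⟨-, h2⟩
      exact h2
  have htj : t j = (Hd + RP + Sv * T) / (RC + Lv * T) := by
    rw [ht j, hsetΛ, finsum_mem_coe_finset, finsum_mem_coe_finset, hNum, hDen]
  have hs0' : s0 = Sv / Lv := by rw [hs0, hSv, hLv]
  have hdiff : t j - s0 = (Lv * (Hd + RP) - Sv * RC) / (Lv * (RC + Lv * T)) := by
    rw [htj, hs0', div_sub_div _ _ hDenne hLne]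
    congr 1 <;> ring
  -- final bound
  have hnum_bd : |Lv * (Hd + RP) - Sv * RC| ≤ |Lv| * CA + |Sv| * CB := by
    have h1 : |Lv * (Hd + RP)| ≤ |Lv| * CA := by
      rw [abs_mul]
      apply mul_le_mul_of_nonneg_left ?_ (abs_nonneg Lv)
      calc |Hd + RP| ≤ |Hd| + |RP| := abs_add_le _ _
        _ ≤ CA := by rw [hCAdef]; linarith
    have h2 : |Sv * RC| ≤ |Sv| * CB := by
      rw [abs_mul]
      exact mul_le_mul_of_nonneg_left hRCbd (abs_nonneg Sv)
    calc |Lv * (Hd + RP) - Sv * RC| ≤ |Lv * (Hd + RP)| + |Sv * RC| := tri _ _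
      _ ≤ |Lv| * CA + |Sv| * CB := by linarith
  have hLvabs : 0 < |Lv| := abs_pos.mpr hLne
  calc |t j - s0| = |Lv * (Hd + RP) - Sv * RC| / (|Lv| * |RC + Lv * T|) := by
        rw [hdiff, abs_div, abs_mul]
    _ ≤ (|Lv| * CA + |Sv| * CB) / (|Lv| * ((δ/2) * j)) := by
        apply div_le_div₀ (add_nonneg (mul_nonneg (abs_nonneg Lv) hCA0)
            (mul_nonneg (abs_nonneg Sv) hCB0)) hnum_bd
          (mul_pos hLvabs (mul_pos (div_pos hδ (by norm_num)) hjpos))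
          (mul_le_mul_of_nonneg_left hDenabs (abs_nonneg Lv))
    _ = C₅ / j := by
        rw [hC₅, div_div]
        congr 1
        ring
    _ < (C₅ + 1) / j := (div_lt_div_iff_of_pos_right hjpos).mpr (by linarith)
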